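/- Let l1, l2, w1, w2, p be positive reals/integers with p ≥ 1 and w1 > w2 > 0, and let f(b) be the polynomial f(b) = -l1·w1^(2p+3)·b^(2p+4) + (l2 + l1·w2)·w1^(2(p+1))·b^(2p+3) - ((p+1)²·l2 - l1·((p+1)·w1 + (p+2)·w2))·w1^(p+2)·w2^p·b^(p+3) + (2p(p+2)·l2 - (2p+3)·l1·(w1+w2))·w1^(p+1)·w2^(p+1)·b^(p+2) - ((p+1)²·l2 - l1·((p+2)·w1 + (p+1)·w2))·w1^p·w2^(p+2)·b^(p+1) + (l2 + l1·w1)·w2^(2(p+1))·b - l1·w2^(2p+3). Then b = w2/w1 is a root of f of multiplicity at least 3: f(w2/w1) = f'(w2/w1) = f''(w2/w1) = 0. -/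

import Mathlib

/-- The CSC condition polynomial `f` of the join `M_{l₁,l₂,w}` has a root of multiplicity
at least 3 at the forbidden value `b = w₂/w₁`: `f(w₂/w₁) = f'(w₂/w₁) = f''(w₂/w₁) = 0`. -/
theorem stmt16 (p : ℕ) (hp : 1 ≤ p) (l1 l2 w1 w2 : ℝ)
    (hl1 : 0 < l1) (hl2 : 0 < l2) (hw2 : 0 < w2) (hw : w2 < w1)
    (f : ℝ → ℝ)
    (hf : ∀ b : ℝ, f b =
      -l1 * w1 ^ (2 * p + 3) * b ^ (2 * p + 4)
      + (l2 + l1 * w2) * w1 ^ (2 * (p + 1)) * b ^ (2 * p + 3)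
      - (((p : ℝ) + 1) ^ 2 * l2 - l1 * (((p : ℝ) + 1) * w1 + ((p : ℝ) + 2) * w2))
        * w1 ^ (p + 2) * w2 ^ p * b ^ (p + 3)
      + (2 * (p : ℝ) * ((p : ℝ) + 2) * l2 - (2 * (p : ℝ) + 3) * l1 * (w1 + w2))
        * w1 ^ (p + 1) * w2 ^ (p + 1) * b ^ (p + 2)
      - (((p : ℝ) + 1) ^ 2 * l2 - l1 * (((p : ℝ) + 2) * w1 + ((p : ℝ) + 1) * w2))
        * w1 ^ p * w2 ^ (p + 2) * b ^ (p + 1)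
      + (l2 + l1 * w1) * w2 ^ (2 * (p + 1)) * b
      - l1 * w2 ^ (2 * p + 3)) :
    f (w2 / w1) = 0 ∧ iteratedDeriv 1 f (w2 / w1) = 0 ∧ iteratedDeriv 2 f (w2 / w1) = 0 := by
  obtain ⟨q, rfl⟩ : ∃ q, p = q + 1 := ⟨p - 1, (Nat.succ_pred_eq_of_pos hp).symm⟩
  have hw1 : (0:ℝ) < w1 := hw2.trans hw
  have hw1' : w1 ≠ 0 := hw1.ne'
  set A : ℝ := -l1 * w1 ^ (2 * (q+1) + 3) with hA
  set B : ℝ := (l2 + l1 * w2) * w1 ^ (2 * ((q+1) + 1)) with hB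
  set C : ℝ := -((((q:ℝ)+1) + 1) ^ 2 * l2 - l1 * ((((q:ℝ)+1) + 1) * w1 + (((q:ℝ)+1) + 2) * w2))
        * w1 ^ ((q+1) + 2) * w2 ^ (q+1) with hC
  set D : ℝ := (2 * ((q:ℝ)+1) * (((q:ℝ)+1) + 2) * l2 - (2 * ((q:ℝ)+1) + 3) * l1 * (w1 + w2))
        * w1 ^ ((q+1) + 1) * w2 ^ ((q+1) + 1) with hD
  set E : ℝ := -((((q:ℝ)+1) + 1) ^ 2 * l2 - l1 * ((((q:ℝ)+1) + 2) * w1 + (((q:ℝ)+1) + 1) * w2))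
        * w1 ^ (q+1) * w2 ^ ((q+1) + 2) with hE
  set F : ℝ := (l2 + l1 * w1) * w2 ^ (2 * ((q+1) + 1)) with hF
  set G : ℝ := -l1 * w2 ^ (2 * (q+1) + 3) with hG
  have hfg : f = fun b => A * b ^ (2*q+6) + B * b ^ (2*q+5) + C * b ^ (q+4)
      + D * b ^ (q+3) + E * b ^ (q+2) + F * b + G := by
    funext b
    rw [hf b]
    have e1 : 2 * (q+1) + 4 = 2*q+6 := by ring
    have e2 : 2 * (q+1) + 3 = 2*q+5 := by ring
    have e3 : (q+1) + 3 = q+4 := by ring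
    have e4 : (q+1) + 2 = q+3 := by ring
    have e5 : (q+1) + 1 = q+2 := by ring
    rw [e1, e2, e3, e4, e5]
    push_cast
    ring
  have hd1 : ∀ x : ℝ, HasDerivAt f
      (A * (2*(q:ℝ)+6) * x ^ (2*q+5) + B * (2*(q:ℝ)+5) * x ^ (2*q+4)
        + C * ((q:ℝ)+4) * x ^ (q+3) + D * ((q:ℝ)+3) * x ^ (q+2)
        + E * ((q:ℝ)+2) * x ^ (q+1) + F) x := by
    intro x
    rw [hfg]
    have h := (((((((hasDerivAt_pow (2*q+6) x).const_mul A).add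
      ((hasDerivAt_pow (2*q+5) x).const_mul B)).add
      ((hasDerivAt_pow (q+4) x).const_mul C)).add
      ((hasDerivAt_pow (q+3) x).const_mul D)).add
      ((hasDerivAt_pow (q+2) x).const_mul E)).add
      ((hasDerivAt_id x).const_mul F)).add_const G
    refine h.congr_deriv ?_
    simp only [show 2*q+6-1 = 2*q+5 by omega, show 2*q+5-1 = 2*q+4 by omega, show q+4-1 = q+3 by omega, show q+3-1 = q+2 by omega, show q+2-1 = q+1 by omega]
    push_cast
    norm_num
    ring
  have hd2 : ∀ x : ℝ, HasDerivAt (deriv f)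
      (A * (2*(q:ℝ)+6) * (2*(q:ℝ)+5) * x ^ (2*q+4) + B * (2*(q:ℝ)+5) * (2*(q:ℝ)+4) * x ^ (2*q+3)
        + C * ((q:ℝ)+4) * ((q:ℝ)+3) * x ^ (q+2) + D * ((q:ℝ)+3) * ((q:ℝ)+2) * x ^ (q+1)
        + E * ((q:ℝ)+2) * ((q:ℝ)+1) * x ^ q) x := by
    intro x
    have hdf : deriv f = fun x => A * (2*(q:ℝ)+6) * x ^ (2*q+5) + B * (2*(q:ℝ)+5) * x ^ (2*q+4)
        + C * ((q:ℝ)+4) * x ^ (q+3) + D * ((q:ℝ)+3) * x ^ (q+2)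
        + E * ((q:ℝ)+2) * x ^ (q+1) + F := funext fun y => (hd1 y).deriv
    rw [hdf]
    have h := ((((((hasDerivAt_pow (2*q+5) x).const_mul (A * (2*(q:ℝ)+6))).add
      ((hasDerivAt_pow (2*q+4) x).const_mul (B * (2*(q:ℝ)+5)))).add
      ((hasDerivAt_pow (q+3) x).const_mul (C * ((q:ℝ)+4)))).add
      ((hasDerivAt_pow (q+2) x).const_mul (D * ((q:ℝ)+3)))).add
      ((hasDerivAt_pow (q+1) x).const_mul (E * ((q:ℝ)+2)))).add_const F
    refine h.congr_deriv ?_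
    simp only [show 2*q+5-1 = 2*q+4 by omega, show 2*q+4-1 = 2*q+3 by omega, show q+3-1 = q+2 by omega, show q+2-1 = q+1 by omega, show q+1-1 = q by omega]
    push_cast
    norm_num
    ring
  refine ⟨?_, ?_, ?_⟩
  · rw [hf]
    simp only [div_pow]
    field_simp
    ring
  · rw [iteratedDeriv_one, (hd1 (w2/w1)).deriv]
    simp only [hA, hB, hC, hD, hE, hF, hG]
    simp only [div_pow]
    field_simp
    ring
  · rw [iteratedDeriv_succ, iteratedDeriv_one, (hd2 (w2/w1)).deriv]
    simp only [hA, hB, hC, hD, hE, hF, hG]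
    simp only [div_pow]
    field_simp
    ring
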